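/- arXiv:2503.03910 — 2 statements merged into one kernel-verified Lean document; each statement's English description precedes it below -/
import Mathlib

section
/- (Score and Hessian bounds for heteroscedastic Gaussian mixture densities.) Fix a probability distribution F on R², a 2×2 symmetric positive definite matrix Ψ, and z ∈ R². Then: (a) ( ‖∇f_{F,Ψ}(z)‖₂ / f_{F,Ψ}(z) )² ≤ ‖Ψ⁻¹‖_F · log( 1 / ((2π)²·det(Ψ)·f_{F,Ψ}(z)²) ); (b) ‖ Ψ + Ψ·(∇²f_{F,Ψ}(z)/f_{F,Ψ}(z))·Ψ ‖_F ≤ ‖Ψ‖_F · log( 1 / ((2π)²·det(Ψ)·f_{F,Ψ}(z)²) ); (c) for all ρ ∈ (0, 1/(2π√e)): ‖∇f_{F,Ψ}(z)‖₂ / max( f_{F,Ψ}(z), ρ/√det(Ψ) ) ≤ ‖Ψ⁻¹‖_F^{1/2} · φ₊(ρ); (d) for all ρ ∈ (0, 1/(2πe)): ( ‖∇f_{F,Ψ}(z)‖₂ / f_{F,Ψ}(z) )² · f_{F,Ψ}(z) / max( f_{F,Ψ}(z), ρ/√det(Ψ) ) ≤ ‖Ψ⁻¹‖_F · φ₊(ρ)²,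 and ‖ Ψ + Ψ·(∇²f_{F,Ψ}(z)/f_{F,Ψ}(z))·Ψ ‖_F · f_{F,Ψ}(z) / max( f_{F,Ψ}(z), ρ/√det(Ψ) ) ≤ ‖Ψ‖_F · φ₊(ρ)². -/
open MeasureTheory ProbabilityTheory Matrix Real Filter Set
open scoped ENNReal NNReal Classical

noncomputable section

namespace PolicyEB

abbrev V : Type := Fin 2 → ℝ
abbrev M2 : Type := Matrix (Fin 2) (Fin 2) ℝ

instance : MeasurableSpace M2 := (inferInstance : MeasurableSpace (Fin 2 → Fin 2 → ℝ))

attribute [local instance] Matrix.normedAddCommGroup Matrix.normedSpace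

/-- Loewner partial order `A ⪯ B` on 2×2 real matrices. -/
def LoewnerLE (A B : M2) : Prop := (B - A).PosSemidef

/-- The standard bivariate Gaussian distribution on `ℝ²`. -/
def stdGauss2 : Measure V :=
  Measure.map (fun p : ℝ × ℝ => ![p.1, p.2])
    ((gaussianReal 0 1).prod (gaussianReal 0 1))

/-- Lebesgue measure on `ℝ²`. -/
def vol2 : Measure V := Measure.pi fun _ => volume

/-- Euclidean norm on `ℝ²`. -/
def n2 (v : V) : ℝ := Real.sqrt (v 0 ^ 2 + v 1 ^ 2)

/-- Sup norm on `ℝ²`. -/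
def ninf (v : V) : ℝ := max |v 0| |v 1|

/-- `ℓ² → ℓ²` operator norm of a 2×2 matrix. -/
def opN (A : M2) : ℝ := sSup {r : ℝ | ∃ x : V, n2 x ≤ 1 ∧ r = n2 (A.mulVec x)}

/-- Frobenius norm of a 2×2 matrix. -/
def frobN (A : M2) : ℝ := Real.sqrt (∑ i, ∑ j, (A i j) ^ 2)

/-- Unnormalized Gaussian kernel `φ_Ψ(x) = exp(-½ xᵀ Ψ⁻¹ x)`. -/
def gk (Ψ : M2) (x : V) : ℝ := Real.exp (-(1 / 2) * (x ⬝ᵥ Ψ⁻¹.mulVec x))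

/-- Normalizing constant `det(2πΨ)^{-1/2}` of a bivariate Gaussian. -/
def gconst (Ψ : M2) : ℝ := (Real.sqrt ((2 * π) ^ 2 * Ψ.det))⁻¹

/-- Mixture density `f_{F,Ψ}`. -/
def mixD (F : Measure V) (Ψ : M2) (x : V) : ℝ := ∫ τ, gconst Ψ * gk Ψ (x - τ) ∂F

/-- Gradient `∇f_{F,Ψ}` of the mixture density. -/
def mixGrad (F : Measure V) (Ψ : M2) (x : V) : V :=
  ∫ τ, (gconst Ψ * gk Ψ (x - τ)) • Ψ⁻¹.mulVec (τ - x) ∂F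

/-- Hessian `∇²f_{F,Ψ}` of the mixture density. -/
def mixHess (F : Measure V) (Ψ : M2) (x : V) : M2 :=
  ∫ τ, (gconst Ψ * gk Ψ (x - τ)) • (Ψ⁻¹ * vecMulVec (τ - x) (τ - x) * Ψ⁻¹ - Ψ⁻¹) ∂F

/-- Posterior mean `E_{F,Ψ}[τ | z]`. -/
def postMean (F : Measure V) (Ψ : M2) (z : V) : V :=
  (∫ τ, gk Ψ (z - τ) ∂F)⁻¹ • ∫ τ, gk Ψ (z - τ) • τ ∂F

/-- Squared Hellinger distance between two densities on `ℝ²`. -/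
def hellSq (f g : V → ℝ) : ℝ := (1 / 2) * ∫ z, (Real.sqrt (f z) - Real.sqrt (g z)) ^ 2 ∂vol2

/-- `ℓ^p` norm on `Fin J → ℝ` for `p ∈ [1,∞]`. -/
def pN {J : ℕ} (p : ℝ≥0∞) (v : Fin J → ℝ) : ℝ :=
  if p = ⊤ then ⨆ j, |v j| else (∑ j, |v j| ^ p.toReal) ^ (1 / p.toReal)

/-- Unit `ℓ^p` ball in `ℝ^J`. -/
def Bp (J : ℕ) (p : ℝ≥0∞) : Set (Fin J → ℝ) := {v | pN p v ≤ 1}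

/-- Normalization factor `N_p`. -/
def Np (J : ℕ) (p : ℝ≥0∞) : ℝ :=
  if p = ⊤ then (J : ℝ) else (J : ℝ) ^ ((p.toReal - 1) / p.toReal)

/-- `κ_J = (3/J) log (J / (2πe)^{1/3})`. -/
def kappaJ (J : ℕ) : ℝ := (3 / (J : ℝ)) * Real.log ((J : ℝ) / (2 * π * Real.exp 1) ^ ((1 : ℝ) / 3))

/-- `φ₊(ρ) = √(log (1/(2πρ)²))`. -/
def phiPlus (ρ : ℝ) : ℝ := Real.sqrt (Real.log (1 / (2 * π * ρ) ^ 2))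

variable {J T : ℕ} {Ωs : Type}

/-- True parameter `θ_j = α_{t_j} + Ω_{t_j}^{1/2} τ_j`. -/
def theta (t : Fin J → Fin T) (α : Fin T → V) (Ws : Fin T → M2)
    (τ : Fin J → Ωs → V) (j : Fin J) (ω : Ωs) : V :=
  α (t j) + (Ws (t j)).mulVec (τ j ω)

/-- Observation `Y_j = θ_j + Σ_j^{1/2} ε_j`. -/
def obsY (t : Fin J → Fin T) (α : Fin T → V) (Ws : Fin T → M2) (Ss : Fin J → M2)
    (τ ε : Fin J → Ωs → V) (j : Fin J) (ω : Ωs) : V :=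
  theta t α Ws τ j ω + (Ss j).mulVec (ε j ω)

/-- All observations `Y_{1:J}` as a map into `(ℝ²)^J`. -/
def Yall (t : Fin J → Fin T) (α : Fin T → V) (Ws : Fin T → M2) (Ss : Fin J → M2)
    (τ ε : Fin J → Ωs → V) (ω : Ωs) : Fin J → V :=
  fun j => obsY t α Ws Ss τ ε j ω

/-- Standardized observation `Z_j = Ω_{t_j}^{-1/2}(Y_j - α_{t_j})`. -/
def Zres (t : Fin J → Fin T) (α : Fin T → V) (Ws : Fin T → M2) (Ss : Fin J → M2)
    (τ ε : Fin J → Ωs → V) (j : Fin J) (ω : Ωs) : V :=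
  (Ws (t j))⁻¹.mulVec (obsY t α Ws Ss τ ε j ω - α (t j))

/-- Standardized noise covariance `Ψ_j = Ω_{t_j}^{-1/2} Σ_j Ω_{t_j}^{-1/2}`. -/
def PsiM (t : Fin J → Fin T) (Ws : Fin T → M2) (Ss : Fin J → M2) (j : Fin J) : M2 :=
  (Ws (t j))⁻¹ * (Ss j * Ss j) * (Ws (t j))⁻¹

/-- `Z̄_J = max(max_j ‖Z_j‖₂, 1)`. -/
def Zbar (t : Fin J → Fin T) (α : Fin T → V) (Ws : Fin T → M2) (Ss : Fin J → M2)
    (τ ε : Fin J → Ωs → V) (ω : Ωs) : ℝ :=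
  max (⨆ j, n2 (Zres t α Ws Ss τ ε j ω)) 1

/-- Oracle posterior mean `θ_j^*`. -/
def thetaStar (F0 : Measure V) (t : Fin J → Fin T) (α : Fin T → V) (Ws : Fin T → M2)
    (Ss : Fin J → M2) (τ ε : Fin J → Ωs → V) (j : Fin J) (ω : Ωs) : V :=
  α (t j) + (Ws (t j)).mulVec (postMean F0 (PsiM t Ws Ss j) (Zres t α Ws Ss τ ε j ω))

/-- Estimated standardized observation `Ẑ_j`. -/
def Zhat (t : Fin J → Fin T) (α : Fin T → V) (Ws : Fin T → M2) (Ss : Fin J → M2)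
    (τ ε : Fin J → Ωs → V) (ahat : Fin T → Ωs → V) (Whts : Fin T → Ωs → M2)
    (j : Fin J) (ω : Ωs) : V :=
  (Whts (t j) ω)⁻¹.mulVec (obsY t α Ws Ss τ ε j ω - ahat (t j) ω)

/-- Estimated standardized noise covariance `Ψ̂_j`. -/
def PsiHat (t : Fin J → Fin T) (Ss : Fin J → M2) (Whts : Fin T → Ωs → M2)
    (j : Fin J) (ω : Ωs) : M2 :=
  (Whts (t j) ω)⁻¹ * (Ss j * Ss j) * (Whts (t j) ω)⁻¹

/-- Empirical Bayes posterior mean `θ̂_j^*` built from an estimated prior `F̂`. -/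
def thetaHatStar (Fhat : Ωs → Measure V) (t : Fin J → Fin T) (α : Fin T → V)
    (Ws : Fin T → M2) (Ss : Fin J → M2) (τ ε : Fin J → Ωs → V)
    (ahat : Fin T → Ωs → V) (Whts : Fin T → Ωs → M2) (j : Fin J) (ω : Ωs) : V :=
  ahat (t j) ω + (Whts (t j) ω).mulVec
    (postMean (Fhat ω) (PsiHat t Ss Whts j ω) (Zhat t α Ws Ss τ ε ahat Whts j ω))

/-- `‖χ̂ - χ₀‖_∞`. -/
def chiDist (α : Fin T → V) (Ws : Fin T → M2) (ahat : Fin T → Ωs → V)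
    (Whts : Fin T → Ωs → M2) (ω : Ωs) : ℝ :=
  ⨆ u, max (ninf (ahat u ω - α u)) (opN (Whts u ω - Ws u))

/-- Gradient of the net welfare impact, `(∇w)_j = η_j WTP_j - μ G_j`. -/
def trueGrad (t : Fin J → Fin T) (α : Fin T → V) (Ws : Fin T → M2)
    (τ : Fin J → Ωs → V) (η : Fin J → ℝ) (μv : ℝ) (ω : Ωs) : Fin J → ℝ :=
  fun j => η j * theta t α Ws τ j ω 0 - μv * theta t α Ws τ j ω 1

/-- Sample plug-in gradient `(∇ŵ)_j = η_j WTP̂_j - μ Ĝ_j`. -/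
def plugGrad (t : Fin J → Fin T) (α : Fin T → V) (Ws : Fin T → M2) (Ss : Fin J → M2)
    (τ ε : Fin J → Ωs → V) (η : Fin J → ℝ) (μv : ℝ) (ω : Ωs) : Fin J → ℝ :=
  fun j => η j * obsY t α Ws Ss τ ε j ω 0 - μv * obsY t α Ws Ss τ ε j ω 1

/-- Oracle gradient `(∇w^*)_j = η_j WTP_j^* - μ G_j^*`. -/
def oracleGrad (F0 : Measure V) (t : Fin J → Fin T) (α : Fin T → V) (Ws : Fin T → M2)
    (Ss : Fin J → M2) (τ ε : Fin J → Ωs → V) (η : Fin J → ℝ) (μv : ℝ) (ω : Ωs) :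
    Fin J → ℝ :=
  fun j => η j * thetaStar F0 t α Ws Ss τ ε j ω 0 - μv * thetaStar F0 t α Ws Ss τ ε j ω 1

/-- Empirical Bayes gradient `(∇ŵ^*)_j = η_j WTP̂_j^* - μ Ĝ_j^*`. -/
def ebGrad (Fhat : Ωs → Measure V) (t : Fin J → Fin T) (α : Fin T → V) (Ws : Fin T → M2)
    (Ss : Fin J → M2) (τ ε : Fin J → Ωs → V) (ahat : Fin T → Ωs → V)
    (Whts : Fin T → Ωs → M2) (η : Fin J → ℝ) (μv : ℝ) (ω : Ωs) : Fin J → ℝ :=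
  fun j => η j * thetaHatStar Fhat t α Ws Ss τ ε ahat Whts j ω 0
    - μv * thetaHatStar Fhat t α Ws Ss τ ε ahat Whts j ω 1

/-- The basic data-generating process: `τ_j` i.i.d. from `F₀` (mean zero, identity covariance,
supported in the rectangle — Assumption 1), `ε_j` i.i.d. standard bivariate Gaussian, all of
`τ_1,…,τ_J,ε_1,…,ε_J` jointly independent, and positive (semi)definiteness of the
square-root scale and noise matrices. -/
structure Model [MeasurableSpace Ωs] (P : Measure Ωs) (t : Fin J → Fin T)
    (F0 : Measure V) (τ ε : Fin J → Ωs → V) (α : Fin T → V) (Ws : Fin T → M2)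
    (Ss : Fin J → M2) (swl swh sgl sgh : ℝ) : Prop where
  probP : IsProbabilityMeasure P
  probF : IsProbabilityMeasure F0
  meas_tau : ∀ j, Measurable (τ j)
  meas_eps : ∀ j, Measurable (ε j)
  indep : iIndepFun
    (Sum.elim τ ε) P
  law_tau : ∀ j, Measure.map (τ j) P = F0
  law_eps : ∀ j, Measure.map (ε j) P = stdGauss2
  mean0 : ∫ v, v ∂F0 = 0
  covId : ∀ i k : Fin 2, ∫ v, v i * v k ∂F0 = if i = k then 1 else 0
  suppF : ∀ᵐ v ∂F0, v 0 ∈ Set.Icc swl swh ∧ v 1 ∈ Set.Icc sgl sgh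
  Ws_psd : ∀ u, (Ws u).PosSemidef
  Omega_pd : ∀ u, (Ws u * Ws u).PosDef
  Ss_psd : ∀ j, (Ss j).PosSemidef
  Sigma_pd : ∀ j, (Ss j * Ss j).PosDef

/-- Assumption 3: `c̲ I₂ ⪯ Ω_t ⪯ c̄ I₂` for all types `t`. -/
structure Assump3 (Ws : Fin T → M2) (cl cu : ℝ) : Prop where
  lower : ∀ u, LoewnerLE (cl • (1 : M2)) (Ws u * Ws u)
  upper : ∀ u, LoewnerLE (Ws u * Ws u) (cu • (1 : M2))

/-- Assumption 4 on the location-scale estimators. -/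
structure Assump4 [MeasurableSpace Ωs] (P : Measure Ωs) (t : Fin J → Fin T)
    (α : Fin T → V) (Ws : Fin T → M2) (Ss : Fin J → M2) (τ ε : Fin J → Ωs → V)
    (ahat : Fin T → Ωs → V) (Whts : Fin T → Ωs → M2)
    (cl cu ml mu kl ku C1 C2 : ℝ) : Prop where
  what_psd : ∀ u ω, (Whts u ω).PosSemidef
  what_lower : ∀ u ω, LoewnerLE (cl • (1 : M2)) (Whts u ω * Whts u ω)
  what_upper : ∀ u ω, LoewnerLE (Whts u ω * Whts u ω) (cu • (1 : M2))
  count_lower : ∀ u, ml * J ≤ ((Finset.univ.filter fun j => t j = u).card : ℝ)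
  count_upper : ∀ u, ((Finset.univ.filter fun j => t j = u).card : ℝ) ≤ mu * J
  psi_lower : ∀ j, LoewnerLE (kl • (1 : M2)) (PsiM t Ws Ss j)
  psi_upper : ∀ j, LoewnerLE (PsiM t Ws Ss j) (ku • (1 : M2))
  meas_ahat : ∀ u,
    Measurable[MeasurableSpace.comap (Yall t α Ws Ss τ ε) inferInstance] (ahat u)
  meas_What : ∀ u,
    Measurable[MeasurableSpace.comap (Yall t α Ws Ss τ ε) inferInstance] (Whts u)
  chi_tail : P {ω | chiDist α Ws ahat Whts ω > C1 * Real.sqrt (Real.log J / J)}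
    ≤ ENNReal.ofReal (C2 / (J : ℝ) ^ 2)

/-- Assumption 5 on the estimated prior `F̂_J` (approximate NPMLE with bounded support). -/
structure Assump5 [MeasurableSpace Ωs] (P : Measure Ωs) (t : Fin J → Fin T)
    (α : Fin T → V) (Ws : Fin T → M2) (Ss : Fin J → M2) (τ ε : Fin J → Ωs → V)
    (ahat : Fin T → Ωs → V) (Whts : Fin T → Ωs → M2) (Fhat : Ωs → Measure V) : Prop where
  meas : Measurable[MeasurableSpace.comap (Yall t α Ws Ss τ ε) inferInstance] Fhat
  prob : ∀ ω, IsProbabilityMeasure (Fhat ω)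
  nearOpt : ∀ᵐ ω ∂P,
    sSup {r : ℝ | ∃ F : Measure V, IsProbabilityMeasure F ∧
        r = (1 / (J : ℝ)) * ∑ j, Real.log
          (∫ x, gk (PsiHat t Ss Whts j ω) (Zhat t α Ws Ss τ ε ahat Whts j ω - x) ∂F)}
      - kappaJ J
    ≤ (1 / (J : ℝ)) * ∑ j, Real.log
        (∫ x, gk (PsiHat t Ss Whts j ω) (Zhat t α Ws Ss τ ε ahat Whts j ω - x) ∂(Fhat ω))
  suppIn : ∀ᵐ ω ∂P,
    (Fhat ω) {x : V | n2 x ≤ ⨆ j, max (n2 (Zhat t α Ws Ss τ ε ahat Whts j ω)) 1}ᶜ = 0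

/-! ### Auxiliary lemmas for Statement 18 -/

private lemma aux_b1 (x : ℝ) (hx : 0 ≤ x) : x * Real.exp (-(1/2)*x) ≤ 2 := by
  have hE : Real.exp (-(1/2)*x) = (Real.exp ((1/2)*x))⁻¹ := by
    rw [← Real.exp_neg]; ring_nf
  rw [hE, mul_inv_le_iff₀' (Real.exp_pos _)]
  nlinarith [Real.add_one_le_exp ((1/2)*x)]

private lemma aux_b2 (x : ℝ) (hx : 0 ≤ x) : Real.sqrt x * Real.exp (-(1/2)*x) ≤ 1 := by
  have h1 : Real.exp (-(1/2)*x) = Real.sqrt (Real.exp (-x)) := by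
    rw [← Real.exp_half]; ring_nf
  rw [h1, ← Real.sqrt_mul hx]
  have h2 : x * Real.exp (-x) ≤ 1 := by
    rw [Real.exp_neg, mul_inv_le_iff₀' (Real.exp_pos _)]
    nlinarith [Real.add_one_le_exp x]
  calc Real.sqrt (x * Real.exp (-x)) ≤ Real.sqrt 1 := Real.sqrt_le_sqrt h2
    _ = 1 := Real.sqrt_one

private lemma aux_int_apply (F : Measure V) (h : V → V)
    (h0 : Integrable (fun τ => h τ 0) F) (h1 : Integrable (fun τ => h τ 1) F)
    (i : Fin 2) : (∫ τ, h τ ∂F) i = ∫ τ, h τ i ∂F := by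
  have hrep : (fun τ => h τ) = (fun τ => (h τ 0) • (Pi.single (0:Fin 2) (1:ℝ) : V)
      + (h τ 1) • (Pi.single (1:Fin 2) (1:ℝ) : V)) := by
    funext τ; funext j; fin_cases j <;> simp
  rw [hrep, integral_add (h0.smul_const _) (h1.smul_const _),
    integral_smul_const, integral_smul_const]
  fin_cases i <;> simp

private lemma aux_matrep (F : Measure V) (h : V → M2) :
    h = fun τ => ∑ kl : Fin 2 × Fin 2,
      (h τ kl.1 kl.2) • Matrix.single kl.1 kl.2 (1:ℝ) := by
  funext τ; ext k l
  rw [Matrix.sum_apply]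
  simp only [Matrix.smul_apply, smul_eq_mul]
  rw [Fintype.sum_prod_type]
  fin_cases k <;> fin_cases l <;>
    simp [Fin.sum_univ_two, Matrix.single]

private lemma aux_integrable_mat (F : Measure V) (h : V → M2)
    (hi : ∀ k l, Integrable (fun τ => h τ k l) F) :
    @Integrable _ _ SeminormedAddGroup.toContinuousENorm _ _ h F := by
  rw [aux_matrep F h]
  exact integrable_finset_sum _ (fun kl _ => (hi kl.1 kl.2).smul_const _)

private lemma aux_int_mat (F : Measure V) (h : V → M2)
    (hi : ∀ k l, Integrable (fun τ => h τ k l) F) (i j : Fin 2) :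
    (∫ τ, h τ ∂F) i j = ∫ τ, h τ i j ∂F := by
  have hrep := aux_matrep F h
  nth_rewrite 1 [hrep]
  rw [integral_finset_sum _ (fun kl _ => (hi kl.1 kl.2).smul_const _)]
  rw [Matrix.sum_apply]
  simp only [integral_smul_const, Matrix.smul_apply, smul_eq_mul]
  rw [Fintype.sum_prod_type]
  fin_cases i <;> fin_cases j <;>
    simp [Fin.sum_univ_two, Matrix.single]

private lemma aux_CS (F : Measure V) (p φ ψ : V → ℝ) (hp : ∀ τ, 0 ≤ p τ)
    (h1 : Integrable (fun τ => φ τ^2 * p τ) F)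
    (h2 : Integrable (fun τ => φ τ * ψ τ * p τ) F)
    (h3 : Integrable (fun τ => ψ τ^2 * p τ) F) :
    (∫ τ, φ τ * ψ τ * p τ ∂F)^2
      ≤ (∫ τ, φ τ^2 * p τ ∂F) * (∫ τ, ψ τ^2 * p τ ∂F) := by
  have key := discrim_le_zero (a := ∫ τ, φ τ^2 * p τ ∂F)
    (b := 2 * ∫ τ, φ τ * ψ τ * p τ ∂F) (c := ∫ τ, ψ τ^2 * p τ ∂F) ?_
  · rw [discrim] at key; nlinarith [key]
  · intro x
    have heq : ∀ τ, (φ τ^2 * p τ) * (x*x) + (2 * (φ τ * ψ τ * p τ)) * x + ψ τ^2 * p τ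
        = p τ * (x * φ τ + ψ τ)^2 := by intro τ; ring
    calc (0:ℝ) ≤ ∫ τ, p τ * (x * φ τ + ψ τ)^2 ∂F :=
          integral_nonneg fun τ => mul_nonneg (hp τ) (sq_nonneg _)
      _ = _ := by
          simp_rw [← heq]
          rw [integral_add (by exact (h1.mul_const _).add ((h2.const_mul _).mul_const _)) h3,
            integral_add (h1.mul_const _) ((h2.const_mul _).mul_const _),
            integral_mul_const, integral_mul_const, integral_const_mul]

private lemma aux_ent (F : Measure V) [IsProbabilityMeasure F] (p : V → ℝ)
    (hp : ∀ τ, 0 < p τ) (hg : 0 < ∫ τ, p τ ∂F)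
    (hip : Integrable p F) (hil : Integrable (fun τ => p τ * Real.log (p τ)) F) :
    ∫ τ, -(p τ * Real.log (p τ)) ∂F ≤ -((∫ τ, p τ ∂F) * Real.log (∫ τ, p τ ∂F)) := by
  set g := ∫ τ, p τ ∂F with hgdef
  have hpt : ∀ τ, -(p τ * Real.log (p τ)) ≤ -(p τ * Real.log g) + (g - p τ) := by
    intro τ
    have h1 : Real.log (g / p τ) ≤ g / p τ - 1 :=
      Real.log_le_sub_one_of_pos (div_pos hg (hp τ))
    rw [Real.log_div hg.ne' (hp τ).ne'] at h1
    have h2 : p τ * (Real.log g - Real.log (p τ)) ≤ p τ * (g / p τ - 1) :=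
      mul_le_mul_of_nonneg_left h1 (hp τ).le
    have h3 : p τ * (g / p τ - 1) = g - p τ := by
      rw [mul_sub, mul_div_cancel₀ _ (hp τ).ne', mul_one]
    nlinarith [h2, h3]
  have i1 : Integrable (fun τ => -(p τ * Real.log g)) F := (hip.mul_const _).neg
  have i2 : Integrable (fun τ => g - p τ) F := (integrable_const g).sub hip
  have i3 : Integrable (fun τ => -(p τ * Real.log (p τ))) F := hil.neg
  calc ∫ τ, -(p τ * Real.log (p τ)) ∂F
      ≤ ∫ τ, (-(p τ * Real.log g) + (g - p τ)) ∂F :=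
        integral_mono i3 (i1.add i2) hpt
    _ = -(g * Real.log g) := by
        rw [integral_add i1 i2, integral_neg, integral_mul_const,
          integral_sub (integrable_const g) hip, integral_const]
        simp [← hgdef]

private lemma aux_mono2 (s r : ℝ) (hs : 0 < s) (hsr : s ≤ r)
    (hr : r ≤ Real.exp (-1)) : s * Real.log (1/s) ≤ r * Real.log (1/r) := by
  have hr0 : 0 < r := lt_of_lt_of_le hs hsr
  have hlr : 1 ≤ Real.log (1/r) := by
    rw [one_div, Real.log_inv, le_neg]
    calc Real.log r ≤ Real.log (Real.exp (-1)) := Real.log_le_log hr0 hr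
      _ = -1 := Real.log_exp _
  have h1 : Real.log (r/s) ≤ r/s - 1 := Real.log_le_sub_one_of_pos (by positivity)
  have h2 : s * Real.log (r/s) ≤ r - s := by
    have h2a := mul_le_mul_of_nonneg_left h1 hs.le
    have h3 : s * (r/s - 1) = r - s := by field_simp
    linarith [h3 ▸ h2a]
  have hsplit : Real.log (1/s) = Real.log (r/s) + Real.log (1/r) := by
    rw [one_div, one_div, Real.log_div hr0.ne' hs.ne', Real.log_inv, Real.log_inv]; ring
  have h4 : (r - s) ≤ (r - s) * Real.log (1/r) := by
    nlinarith [sub_nonneg.2 hsr]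
  nlinarith [h2, h4, hsplit, mul_le_mul_of_nonneg_left hlr hs.le]

private lemma aux_mono1 (s r : ℝ) (hs : 0 < s) (hsr : s ≤ r)
    (hr : r ≤ Real.exp (-(1/2))) : s^2 * Real.log (1/s) ≤ r^2 * Real.log (1/r) := by
  have hr0 : 0 < r := lt_of_lt_of_le hs hsr
  have hlogr : Real.log (1/r) = -Real.log r := by rw [one_div, Real.log_inv]
  have hlr : 1/2 ≤ Real.log (1/r) := by
    rw [hlogr, le_neg]
    calc Real.log r ≤ Real.log (Real.exp (-(1/2))) := Real.log_le_log hr0 hr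
      _ = -(1/2) := Real.log_exp _
  have h1 : Real.log (r/s) ≤ r/s - 1 := Real.log_le_sub_one_of_pos (by positivity)
  have h2 : s^2 * Real.log (r/s) ≤ s*(r - s) := by
    have h2a := mul_le_mul_of_nonneg_left h1 (sq_nonneg s)
    have h3 : s^2 * (r/s - 1) = s*(r - s) := by field_simp
    linarith [h3 ▸ h2a]
  have hsplit : Real.log (1/s) = Real.log (r/s) + Real.log (1/r) := by
    rw [one_div, one_div, Real.log_div hr0.ne' hs.ne', Real.log_inv, Real.log_inv]; ring
  have h4 : s*(r - s) ≤ (r^2 - s^2) * Real.log (1/r) := by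
    have h4a := mul_le_mul_of_nonneg_left hlr
      (mul_nonneg (sub_nonneg.2 hsr) (by linarith : (0:ℝ) ≤ r + s))
    nlinarith [h4a, sq_nonneg (r - s)]
  nlinarith [h2, h4, hsplit, mul_le_mul_of_nonneg_left hlr (sq_nonneg s)]

private lemma aux_scalar (a b c f w0 w1 : ℝ) (ha : 0 < a) (hc : 0 < c)
    (hb : b^2 ≤ a*c) (hf0 : 0 ≤ f) (hf2 : f^2 = a^2+2*b^2+c^2)
    (hQ : 0 ≤ a*w0^2 + 2*b*w0*w1 + c*w1^2) :
    (a*w0+b*w1)^2 + (b*w0+c*w1)^2 ≤ f * (a*w0^2 + 2*b*w0*w1 + c*w1^2) := by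
  set N := w0^2+w1^2 with hN
  set Q := a*w0^2 + 2*b*w0*w1 + c*w1^2 with hQdef
  have hN0 : 0 ≤ N := by positivity
  have h1 : (2*Q - N*(a+c))^2 ≤ (N*f)^2 := by
    have key : (2*Q - N*(a+c))^2 + ((a-c)*(2*w0*w1) - 2*b*(w0^2-w1^2))^2
        = ((a-c)^2+4*b^2) * N^2 := by rw [hQdef, hN]; ring
    have h4 : ((a-c)^2+4*b^2) * N^2 ≤ (N*f)^2 := by nlinarith [sq_nonneg N]
    nlinarith [sq_nonneg ((a-c)*(2*w0*w1) - 2*b*(w0^2-w1^2))]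
  have h2 : 2*Q - N*(a+c) ≤ N*f := by nlinarith [mul_nonneg hN0 hf0]
  rcases le_or_gt (a+c) f with h | h
  · nlinarith [mul_nonneg (sub_nonneg.2 h) hQ]
  · have h3 : (a+c-f)*(2*Q) ≤ (a+c-f)*(N*(a+c)+N*f) := by
      apply mul_le_mul_of_nonneg_left _ (by linarith)
      linarith
    nlinarith []

private lemma aux_keymat (B : M2) (hB : B.PosDef) (w : V) :
    (B.mulVec w 0)^2 + (B.mulVec w 1)^2 ≤ frobN B * (w ⬝ᵥ B.mulVec w) := by
  have hsym : B 1 0 = B 0 1 := by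
    have h := hB.1; rw [Matrix.IsHermitian] at h
    have h2 := congrFun (congrFun h 0) 1
    simpa [Matrix.conjTranspose_apply] using h2
  have ha : 0 < B 0 0 := by
    have h := (posDef_iff_dotProduct_mulVec.1 hB).2 (x := fun i => if i = 0 then 1 else 0) (by
      intro hcon; have := congrFun hcon 0; simp at this)
    simpa [Matrix.mulVec, dotProduct, Fin.sum_univ_two] using h
  have hc : 0 < B 1 1 := by
    have h := (posDef_iff_dotProduct_mulVec.1 hB).2 (x := fun i => if i = 1 then 1 else 0) (by
      intro hcon; have := congrFun hcon 1; simp at this)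
    simpa [Matrix.mulVec, dotProduct, Fin.sum_univ_two] using h
  have hdet : 0 < B 0 0 * B 1 1 - B 0 1 * B 1 0 := by
    have h := hB.det_pos; rwa [Matrix.det_fin_two] at h
  have hb : (B 0 1)^2 ≤ B 0 0 * B 1 1 := by rw [hsym] at hdet; nlinarith [hdet]
  have hQ : 0 ≤ w ⬝ᵥ B.mulVec w := by
    rcases eq_or_ne w 0 with rfl | hw
    · simp
    · exact le_of_lt (by simpa using (posDef_iff_dotProduct_mulVec.1 hB).2 (x := w) hw)
  have hfr : (frobN B)^2 = B 0 0^2 + 2 * B 0 1^2 + B 1 1^2 := by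
    rw [frobN, Real.sq_sqrt (by positivity)]
    simp [Fin.sum_univ_two, hsym]; ring
  have hf0 : 0 ≤ frobN B := Real.sqrt_nonneg _
  have hmv0 : B.mulVec w 0 = B 0 0 * w 0 + B 0 1 * w 1 := by
    simp [Matrix.mulVec, dotProduct, Fin.sum_univ_two]
  have hmv1 : B.mulVec w 1 = B 0 1 * w 0 + B 1 1 * w 1 := by
    simp [Matrix.mulVec, dotProduct, Fin.sum_univ_two, hsym]
  have hquad : w ⬝ᵥ B.mulVec w
      = B 0 0 * (w 0)^2 + 2 * B 0 1 * w 0 * w 1 + B 1 1 * (w 1)^2 := by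
    simp [Matrix.mulVec, dotProduct, Fin.sum_univ_two, hsym]; ring
  rw [hquad] at hQ ⊢
  rw [hmv0, hmv1]
  exact aux_scalar _ _ _ _ _ _ ha hc hb hf0 hfr hQ

private lemma aux_keymat2 (Ψ : M2) (hΨ : Ψ.PosDef) (w : V) :
    (w 0)^2 + (w 1)^2 ≤ frobN Ψ * (w ⬝ᵥ Ψ⁻¹.mulVec w) := by
  have hu : Ψ.mulVec (Ψ⁻¹.mulVec w) = w := by
    rw [Matrix.mulVec_mulVec, Matrix.mul_nonsing_inv _ (isUnit_iff_ne_zero.2 hΨ.det_pos.ne'), Matrix.one_mulVec]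
  have h := aux_keymat Ψ hΨ (Ψ⁻¹.mulVec w)
  rw [hu] at h
  rwa [dotProduct_comm] at h

set_option maxHeartbeats 4000000

/-- Lemma SM6.8: score and Hessian bounds for heteroscedastic Gaussian
mixture densities. -/
theorem lem_score_hessian_bounds (F : Measure V) (hF : IsProbabilityMeasure F)
    (Ψ : M2) (hΨ : Ψ.PosDef) (z : V) :
    -- (a)
    ((n2 (mixGrad F Ψ z) / mixD F Ψ z) ^ 2
      ≤ frobN Ψ⁻¹ * Real.log (1 / ((2 * π) ^ 2 * Ψ.det * mixD F Ψ z ^ 2))) ∧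
    -- (b)
    (frobN (Ψ + (mixD F Ψ z)⁻¹ • (Ψ * mixHess F Ψ z * Ψ))
      ≤ frobN Ψ * Real.log (1 / ((2 * π) ^ 2 * Ψ.det * mixD F Ψ z ^ 2))) ∧
    -- (c)
    (∀ ρ : ℝ, 0 < ρ → ρ < 1 / (2 * π * Real.sqrt (Real.exp 1)) →
      n2 (mixGrad F Ψ z) / max (mixD F Ψ z) (ρ / Real.sqrt Ψ.det)
        ≤ Real.sqrt (frobN Ψ⁻¹) * phiPlus ρ) ∧
    -- (d)
    (∀ ρ : ℝ, 0 < ρ → ρ < 1 / (2 * π * Real.exp 1) →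
      ((n2 (mixGrad F Ψ z) / mixD F Ψ z) ^ 2
          * (mixD F Ψ z / max (mixD F Ψ z) (ρ / Real.sqrt Ψ.det))
        ≤ frobN Ψ⁻¹ * phiPlus ρ ^ 2) ∧
      (frobN (Ψ + (mixD F Ψ z)⁻¹ • (Ψ * mixHess F Ψ z * Ψ))
          * (mixD F Ψ z / max (mixD F Ψ z) (ρ / Real.sqrt Ψ.det))
        ≤ frobN Ψ * phiPlus ρ ^ 2)) := by
  haveI := hF
  set A := Ψ⁻¹ with hAdef
  have hA : A.PosDef := hΨ.inv
  have hdet : 0 < Ψ.det := hΨ.det_pos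
  have hπ : 0 < π := Real.pi_pos
  have hDpos : 0 < (2*π)^2 * Ψ.det := by positivity
  have hc : 0 < gconst Ψ := by
    rw [gconst]; exact inv_pos.2 (Real.sqrt_pos.2 hDpos)
  set c := gconst Ψ with hcdef
  have hc2 : c^2 * ((2*π)^2 * Ψ.det) = 1 := by
    rw [hcdef, gconst, inv_pow, Real.sq_sqrt hDpos.le]
    exact inv_mul_cancel₀ hDpos.ne'
  set q : V → ℝ := fun τ => (τ - z) ⬝ᵥ A.mulVec (τ - z) with hqdef
  have hq0 : ∀ τ, 0 ≤ q τ := by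
    intro τ
    rcases eq_or_ne (τ - z) 0 with h | h
    · simp only [hqdef, h, zero_dotProduct, le_refl]
    · exact le_of_lt (by simpa [hqdef] using (posDef_iff_dotProduct_mulVec.1 hA).2 (x := τ - z) h)
  set p : V → ℝ := fun τ => Real.exp (-(1/2) * q τ) with hpdef
  have hgk : ∀ τ, gk Ψ (z - τ) = p τ := by
    intro τ
    rw [gk, hpdef]
    congr 1
    rw [show z - τ = -(τ - z) from (neg_sub τ z).symm, Matrix.mulVec_neg,
      dotProduct_neg, neg_dotProduct, neg_neg, ← hAdef, hqdef]
  have hp_pos : ∀ τ, 0 < p τ := fun τ => Real.exp_pos _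
  have hp_le1 : ∀ τ, p τ ≤ 1 := by
    intro τ
    rw [hpdef]
    exact Real.exp_le_one_iff.2 (by nlinarith [hq0 τ])
  have hlogp : ∀ τ, Real.log (p τ) = -(1/2) * q τ := fun τ => Real.log_exp _
  have hqc : Continuous q := by
    rw [hqdef]; simp only [dotProduct, Matrix.mulVec]; fun_prop
  have hpc : Continuous p := by
    rw [hpdef]; exact Real.continuous_exp.comp (continuous_const.mul hqc)
  set u : V → V := fun τ => A.mulVec (τ - z) with hudef
  have huc : ∀ i, Continuous fun τ => u τ i := by
    intro i; rw [hudef]; simp only [Matrix.mulVec, dotProduct]; fun_prop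
  have hvc : ∀ i : Fin 2, Continuous fun τ : V => (τ - z) i := by
    intro i
    simp only [Pi.sub_apply]
    fun_prop
  have hfrA : 0 ≤ frobN A := Real.sqrt_nonneg _
  have hfrP : 0 ≤ frobN Ψ := Real.sqrt_nonneg _
  have hkeyA : ∀ τ, (u τ 0)^2 + (u τ 1)^2 ≤ frobN A * q τ := by
    intro τ
    simpa [hudef, hqdef] using aux_keymat A hA (τ - z)
  have hkeyP : ∀ τ, ((τ-z) 0)^2 + ((τ-z) 1)^2 ≤ frobN Ψ * q τ := by
    intro τ
    simpa [hqdef, hAdef] using aux_keymat2 Ψ hΨ (τ - z)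
  -- integrability
  have ip : Integrable p F := by
    refine (integrable_const (1:ℝ)).mono' hpc.aestronglyMeasurable ?_
    filter_upwards with τ
    rw [Real.norm_eq_abs, abs_of_pos (hp_pos τ)]; exact hp_le1 τ
  have iqp : Integrable (fun τ => q τ * p τ) F := by
    refine (integrable_const (2:ℝ)).mono' (hqc.mul hpc).aestronglyMeasurable ?_
    filter_upwards with τ
    rw [Real.norm_eq_abs, abs_of_nonneg (mul_nonneg (hq0 τ) (hp_pos τ).le), hpdef]
    exact aux_b1 (q τ) (hq0 τ)
  have husq : ∀ (i : Fin 2) τ, (u τ i)^2 ≤ frobN A * q τ := by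
    intro i τ
    have h0 : (u τ 0)^2 ≤ frobN A * q τ := by nlinarith [hkeyA τ, sq_nonneg (u τ 1)]
    have h1 : (u τ 1)^2 ≤ frobN A * q τ := by nlinarith [hkeyA τ, sq_nonneg (u τ 0)]
    fin_cases i
    · exact h0
    · exact h1
  have iup : ∀ i, Integrable (fun τ => u τ i * p τ) F := by
    intro i
    refine (integrable_const (Real.sqrt (frobN A))).mono'
      ((huc i).mul hpc).aestronglyMeasurable ?_
    filter_upwards with τ
    rw [Real.norm_eq_abs, abs_mul, abs_of_pos (hp_pos τ)]
    have h1 : |u τ i| ≤ Real.sqrt (frobN A * q τ) := by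
      rw [← Real.sqrt_sq_eq_abs]
      exact Real.sqrt_le_sqrt (husq i τ)
    calc |u τ i| * p τ ≤ Real.sqrt (frobN A * q τ) * p τ :=
          mul_le_mul_of_nonneg_right h1 (hp_pos τ).le
      _ = Real.sqrt (frobN A) * (Real.sqrt (q τ) * p τ) := by
          rw [Real.sqrt_mul hfrA]; ring
      _ ≤ Real.sqrt (frobN A) * 1 := by
          refine mul_le_mul_of_nonneg_left ?_ (Real.sqrt_nonneg _)
          rw [hpdef]; exact aux_b2 (q τ) (hq0 τ)
      _ = Real.sqrt (frobN A) := mul_one _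
  have iuup : ∀ i j, Integrable (fun τ => u τ i * u τ j * p τ) F := by
    intro i j
    refine (integrable_const (2 * frobN A)).mono'
      (((huc i).mul (huc j)).mul hpc).aestronglyMeasurable ?_
    filter_upwards with τ
    rw [Real.norm_eq_abs, abs_mul, abs_of_pos (hp_pos τ), abs_mul]
    have h1 : |u τ i| * |u τ j| ≤ frobN A * q τ := by
      have := husq i τ; have := husq j τ
      nlinarith [sq_nonneg (|u τ i| - |u τ j|), sq_abs (u τ i), sq_abs (u τ j)]
    calc |u τ i| * |u τ j| * p τ ≤ (frobN A * q τ) * p τ :=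
          mul_le_mul_of_nonneg_right h1 (hp_pos τ).le
      _ = frobN A * (q τ * p τ) := by ring
      _ ≤ frobN A * 2 := by
          refine mul_le_mul_of_nonneg_left ?_ hfrA
          rw [hpdef]; exact aux_b1 (q τ) (hq0 τ)
      _ = 2 * frobN A := by ring
  have ivvp : ∀ i j : Fin 2, Integrable (fun τ => (τ-z) i * (τ-z) j * p τ) F := by
    intro i j
    refine (integrable_const (2 * frobN Ψ)).mono'
      (((hvc i).mul (hvc j)).mul hpc).aestronglyMeasurable ?_
    filter_upwards with τ
    rw [Real.norm_eq_abs, abs_mul, abs_of_pos (hp_pos τ), abs_mul]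
    have hvsq : ∀ k : Fin 2, ((τ-z) k)^2 ≤ frobN Ψ * q τ := by
      intro k
      have h0 : ((τ-z) 0)^2 ≤ frobN Ψ * q τ := by nlinarith [hkeyP τ, sq_nonneg ((τ-z) 1)]
      have h1 : ((τ-z) 1)^2 ≤ frobN Ψ * q τ := by nlinarith [hkeyP τ, sq_nonneg ((τ-z) 0)]
      fin_cases k
      · exact h0
      · exact h1
    have h1 : |(τ-z) i| * |(τ-z) j| ≤ frobN Ψ * q τ := by
      have := hvsq i; have := hvsq j
      nlinarith [sq_nonneg (|(τ-z) i| - |(τ-z) j|), sq_abs ((τ-z) i), sq_abs ((τ-z) j)]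
    calc |(τ-z) i| * |(τ-z) j| * p τ ≤ (frobN Ψ * q τ) * p τ :=
          mul_le_mul_of_nonneg_right h1 (hp_pos τ).le
      _ = frobN Ψ * (q τ * p τ) := by ring
      _ ≤ frobN Ψ * 2 := by
          refine mul_le_mul_of_nonneg_left ?_ hfrP
          rw [hpdef]; exact aux_b1 (q τ) (hq0 τ)
      _ = 2 * frobN Ψ := by ring
  -- the mass g
  set g := ∫ τ, p τ ∂F with hgdef
  have hg_pos : 0 < g := by
    rw [hgdef]
    refine (integral_pos_iff_support_of_nonneg_ae
      (Filter.Eventually.of_forall fun τ => (hp_pos τ).le) ip).2 ?_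
    have hsupp : Function.support p = Set.univ :=
      Set.eq_univ_of_forall fun τ => (hp_pos τ).ne'
    rw [hsupp]
    simp [measure_univ]
  have hg1 : g ≤ 1 := by
    rw [hgdef]
    calc ∫ τ, p τ ∂F ≤ ∫ _τ, (1:ℝ) ∂F :=
          integral_mono ip (integrable_const 1) hp_le1
      _ = 1 := by simp
  have hfD : mixD F Ψ z = c * g := by
    rw [mixD, ← hcdef, hgdef]
    simp_rw [hgk]
    exact integral_const_mul c _
  have hf_pos : 0 < mixD F Ψ z := by rw [hfD]; exact mul_pos hc hg_pos
  -- the log quantity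
  set L := Real.log (1 / g^2) with hLdef
  have hlogeq : Real.log (1 / ((2*π)^2 * Ψ.det * mixD F Ψ z ^2)) = L := by
    rw [hLdef]
    congr 2
    rw [hfD]
    nlinarith [hc2]
  have hL : L = -(2 * Real.log g) := by
    rw [hLdef, one_div, Real.log_inv, Real.log_pow]
    push_cast; ring
  have hL0 : 0 ≤ L := by
    have hlg : Real.log g ≤ 0 := Real.log_nonpos hg_pos.le hg1
    rw [hL]; linarith
  -- entropy bound
  have hiql : Integrable (fun τ => p τ * Real.log (p τ)) F := by
    have heq : (fun τ => p τ * Real.log (p τ)) = fun τ => (-(1/2)) * (q τ * p τ) :=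
      funext fun τ => by rw [hlogp τ]; ring
    rw [heq]; exact iqp.const_mul _
  have hEnt : ∫ τ, q τ * p τ ∂F ≤ g * L := by
    have h1 := aux_ent F p hp_pos (hgdef ▸ hg_pos) ip hiql
    rw [← hgdef] at h1
    have heq : (fun τ => q τ * p τ) = fun τ => 2 * (-(p τ * Real.log (p τ))) :=
      funext fun τ => by rw [hlogp τ]; ring
    rw [heq, integral_const_mul, hL]
    nlinarith [h1]
  -- second moments
  have hsum2A : (∫ τ, u τ 0 * u τ 0 * p τ ∂F) + (∫ τ, u τ 1 * u τ 1 * p τ ∂F)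
      ≤ frobN A * (g * L) := by
    rw [← integral_add (iuup 0 0) (iuup 1 1)]
    calc ∫ τ, (u τ 0 * u τ 0 * p τ + u τ 1 * u τ 1 * p τ) ∂F
        ≤ ∫ τ, frobN A * (q τ * p τ) ∂F := by
          refine integral_mono ((iuup 0 0).add (iuup 1 1)) (iqp.const_mul _) ?_
          intro τ
          show u τ 0 * u τ 0 * p τ + u τ 1 * u τ 1 * p τ ≤ frobN A * (q τ * p τ)
          have hpos := (hp_pos τ).le
          nlinarith [mul_le_mul_of_nonneg_right (hkeyA τ) hpos]
      _ = frobN A * ∫ τ, q τ * p τ ∂F := integral_const_mul _ _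
      _ ≤ frobN A * (g * L) := mul_le_mul_of_nonneg_left hEnt hfrA
  have hsum2P : (∫ τ, (τ-z) 0 * (τ-z) 0 * p τ ∂F) + (∫ τ, (τ-z) 1 * (τ-z) 1 * p τ ∂F)
      ≤ frobN Ψ * (g * L) := by
    rw [← integral_add (ivvp 0 0) (ivvp 1 1)]
    calc ∫ τ, ((τ-z) 0 * (τ-z) 0 * p τ + (τ-z) 1 * (τ-z) 1 * p τ) ∂F
        ≤ ∫ τ, frobN Ψ * (q τ * p τ) ∂F := by
          refine integral_mono ((ivvp 0 0).add (ivvp 1 1)) (iqp.const_mul _) ?_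
          intro τ
          show (τ-z) 0 * (τ-z) 0 * p τ + (τ-z) 1 * (τ-z) 1 * p τ ≤ frobN Ψ * (q τ * p τ)
          have hpos := (hp_pos τ).le
          nlinarith [mul_le_mul_of_nonneg_right (hkeyP τ) hpos]
      _ = frobN Ψ * ∫ τ, q τ * p τ ∂F := integral_const_mul _ _
      _ ≤ frobN Ψ * (g * L) := mul_le_mul_of_nonneg_left hEnt hfrP
  -- gradient components
  have hgrad_i : ∀ i, mixGrad F Ψ z i = c * ∫ τ, u τ i * p τ ∂F := by
    intro i
    have hfun : (fun τ => (gconst Ψ * gk Ψ (z - τ)) • Ψ⁻¹.mulVec (τ - z))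
        = fun τ => (c * p τ) • u τ := by
      funext τ
      rw [hgk, ← hcdef, ← hAdef, hudef]
    have hcomp : ∀ j : Fin 2, Integrable (fun τ => ((c * p τ) • u τ) j) F := by
      intro j
      have : (fun τ => ((c * p τ) • u τ) j) = fun τ => c * (u τ j * p τ) :=
        funext fun τ => by simp [smul_eq_mul]; ring
      rw [this]; exact (iup j).const_mul c
    rw [mixGrad, hfun, aux_int_apply F _ (hcomp 0) (hcomp 1) i]
    have : (fun τ => ((c * p τ) • u τ) i) = fun τ => c * (u τ i * p τ) :=
      funext fun τ => by simp [smul_eq_mul]; ring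
    rw [this, integral_const_mul]
  -- Cauchy–Schwarz for the gradient
  have hCS : ∀ i, (∫ τ, u τ i * p τ ∂F)^2 ≤ (∫ τ, u τ i * u τ i * p τ ∂F) * g := by
    intro i
    have h := aux_CS F p (fun τ => u τ i) (fun _ => 1) (fun τ => (hp_pos τ).le)
      (by simpa [sq] using iuup i i) (by simpa using iup i) (by simpa using ip)
    simpa [sq, hgdef] using h
  have hn2nonneg : 0 ≤ n2 (mixGrad F Ψ z) := Real.sqrt_nonneg _
  have HGradSq : (n2 (mixGrad F Ψ z))^2 ≤ frobN A * L * (mixD F Ψ z)^2 := by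
    have hn2 : (n2 (mixGrad F Ψ z))^2
        = (mixGrad F Ψ z 0)^2 + (mixGrad F Ψ z 1)^2 := by
      rw [n2, Real.sq_sqrt (by positivity)]
    rw [hn2, hgrad_i 0, hgrad_i 1, hfD]
    have h0 := hCS 0
    have h1 := hCS 1
    have hs := hsum2A
    have hI0 : 0 ≤ ∫ τ, u τ 0 * u τ 0 * p τ ∂F :=
      integral_nonneg fun τ => mul_nonneg (mul_self_nonneg _) (hp_pos τ).le
    have hI1 : 0 ≤ ∫ τ, u τ 1 * u τ 1 * p τ ∂F :=
      integral_nonneg fun τ => mul_nonneg (mul_self_nonneg _) (hp_pos τ).le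
    have hw : (∫ τ, u τ 0 * p τ ∂F)^2 + (∫ τ, u τ 1 * p τ ∂F)^2
        ≤ frobN A * (g * L) * g := by
      nlinarith [mul_le_mul_of_nonneg_right hs hg_pos.le]
    nlinarith [mul_le_mul_of_nonneg_left hw (sq_nonneg c)]
  -- part (a)
  have parta : (n2 (mixGrad F Ψ z) / mixD F Ψ z) ^ 2 ≤ frobN A * L := by
    rw [div_pow, div_le_iff₀ (by positivity)]
    linarith [HGradSq]
    -- Hessian manipulation
  have hΨA : Ψ * A = 1 := by
    rw [hAdef]; exact Matrix.mul_nonsing_inv _ (isUnit_iff_ne_zero.2 hdet.ne')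
  have hAΨ : A * Ψ = 1 := by
    rw [hAdef]; exact Matrix.nonsing_inv_mul _ (isUnit_iff_ne_zero.2 hdet.ne')
  have hsymA : A 1 0 = A 0 1 := by
    have h := hA.1; rw [Matrix.IsHermitian] at h
    have h2 := congrFun (congrFun h 0) 1
    simpa [Matrix.conjTranspose_apply] using h2
  have hMid : ∀ W : M2, Ψ * (A * W * A - A) * Ψ = W - Ψ := by
    intro W
    have e1 : Ψ * (A * W * A - A) * Ψ = (Ψ*A) * W * (A*Ψ) - (Ψ*A)*Ψ := by noncomm_ring
    rw [e1, hΨA, hAΨ, one_mul, mul_one, one_mul]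
  have hMentry : ∀ τ (k l : Fin 2),
      (A * vecMulVec (τ-z) (τ-z) * A - A) k l = u τ k * u τ l - A k l := by
    intro τ k l
    rw [Matrix.sub_apply]
    congr 1
    have e00 : (A * vecMulVec (τ-z) (τ-z) * A) 0 0 = u τ 0 * u τ 0 := by
      simp [Matrix.mul_apply, Matrix.vecMulVec_apply, hudef, Matrix.mulVec,
        dotProduct, Fin.sum_univ_two, hsymA]; ring
    have e01 : (A * vecMulVec (τ-z) (τ-z) * A) 0 1 = u τ 0 * u τ 1 := by
      simp [Matrix.mul_apply, Matrix.vecMulVec_apply, hudef, Matrix.mulVec,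
        dotProduct, Fin.sum_univ_two, hsymA]; ring
    have e10 : (A * vecMulVec (τ-z) (τ-z) * A) 1 0 = u τ 1 * u τ 0 := by
      simp [Matrix.mul_apply, Matrix.vecMulVec_apply, hudef, Matrix.mulVec,
        dotProduct, Fin.sum_univ_two, hsymA]; ring
    have e11 : (A * vecMulVec (τ-z) (τ-z) * A) 1 1 = u τ 1 * u τ 1 := by
      simp [Matrix.mul_apply, Matrix.vecMulVec_apply, hudef, Matrix.mulVec,
        dotProduct, Fin.sum_univ_two, hsymA]; ring
    fin_cases k <;> fin_cases l
    · exact e00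
    · exact e01
    · exact e10
    · exact e11
  have hHint : @Integrable _ _ SeminormedAddGroup.toContinuousENorm _ _
      (fun τ => (c * p τ) • (A * vecMulVec (τ-z) (τ-z) * A - A)) F := by
    apply aux_integrable_mat
    intro k l
    have heq : (fun τ => ((c * p τ) • (A * vecMulVec (τ-z) (τ-z) * A - A)) k l)
        = fun τ => c * (u τ k * u τ l * p τ) - (c * A k l) * p τ := by
      funext τ
      rw [Matrix.smul_apply, hMentry τ k l, smul_eq_mul]; ring
    rw [heq]
    exact ((iuup k l).const_mul c).sub (ip.const_mul _)
  have hPHP : Ψ * mixHess F Ψ z * Ψ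
      = ∫ τ, (c * p τ) • (vecMulVec (τ-z) (τ-z) - Ψ) ∂F := by
    have hfun : (fun τ => (gconst Ψ * gk Ψ (z - τ))
          • (Ψ⁻¹ * vecMulVec (τ - z) (τ - z) * Ψ⁻¹ - Ψ⁻¹))
        = fun τ => (c * p τ) • (A * vecMulVec (τ-z) (τ-z) * A - A) := by
      funext τ; rw [hgk, ← hcdef, ← hAdef]
    have hL2 : ∀ X : M2, (LinearMap.toContinuousLinearMap
        ((LinearMap.mulRight ℝ Ψ).comp (LinearMap.mulLeft ℝ Ψ))) X = Ψ * X * Ψ :=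
      fun X => rfl
    calc Ψ * mixHess F Ψ z * Ψ
        = (LinearMap.toContinuousLinearMap
            ((LinearMap.mulRight ℝ Ψ).comp (LinearMap.mulLeft ℝ Ψ)))
            (∫ τ, (c * p τ) • (A * vecMulVec (τ-z) (τ-z) * A - A) ∂F) := by
          rw [mixHess, hfun, hL2]
      _ = ∫ τ, (LinearMap.toContinuousLinearMap
            ((LinearMap.mulRight ℝ Ψ).comp (LinearMap.mulLeft ℝ Ψ)))
            ((c * p τ) • (A * vecMulVec (τ-z) (τ-z) * A - A)) ∂F :=
          (ContinuousLinearMap.integral_comp_comm _ hHint).symm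
      _ = ∫ τ, (c * p τ) • (vecMulVec (τ-z) (τ-z) - Ψ) ∂F := by
          congr 1
          funext τ
          rw [ContinuousLinearMap.map_smul, hL2, hMid]
  have hvventry : ∀ k l : Fin 2, (fun τ => ((c * p τ) • (vecMulVec (τ-z) (τ-z) - Ψ)) k l)
      = fun τ => c * ((τ-z) k * (τ-z) l * p τ) - (c * Ψ k l) * p τ := by
    intro k l
    funext τ
    rw [Matrix.smul_apply, Matrix.sub_apply, Matrix.vecMulVec_apply, smul_eq_mul]; ring
  have hvvint : ∀ k l : Fin 2,
      Integrable (fun τ => ((c * p τ) • (vecMulVec (τ-z) (τ-z) - Ψ)) k l) F := by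
    intro k l
    rw [hvventry k l]
    exact ((ivvp k l).const_mul c).sub (ip.const_mul _)
  have hT : ∀ k l : Fin 2, (Ψ + (mixD F Ψ z)⁻¹ • (Ψ * mixHess F Ψ z * Ψ)) k l
      = g⁻¹ * ∫ τ, (τ-z) k * (τ-z) l * p τ ∂F := by
    intro k l
    rw [Matrix.add_apply, Matrix.smul_apply, hPHP, aux_int_mat F _ hvvint k l,
      smul_eq_mul, hvventry k l,
      integral_sub ((ivvp k l).const_mul c) (ip.const_mul _),
      integral_const_mul, integral_const_mul, ← hgdef, hfD]
    field_simp
    ring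
  have hI10eq : (∫ τ, (τ-z) 1 * (τ-z) 0 * p τ ∂F) = ∫ τ, (τ-z) 0 * (τ-z) 1 * p τ ∂F := by
    congr 1; funext τ; ring
  have hI00n : 0 ≤ ∫ τ, (τ-z) 0 * (τ-z) 0 * p τ ∂F :=
    integral_nonneg fun τ => mul_nonneg (mul_self_nonneg _) (hp_pos τ).le
  have hI11n : 0 ≤ ∫ τ, (τ-z) 1 * (τ-z) 1 * p τ ∂F :=
    integral_nonneg fun τ => mul_nonneg (mul_self_nonneg _) (hp_pos τ).le
  have hCSb : (∫ τ, (τ-z) 0 * (τ-z) 1 * p τ ∂F)^2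
      ≤ (∫ τ, (τ-z) 0 * (τ-z) 0 * p τ ∂F) * ∫ τ, (τ-z) 1 * (τ-z) 1 * p τ ∂F := by
    have h := aux_CS F p (fun τ => (τ-z) 0) (fun τ => (τ-z) 1) (fun τ => (hp_pos τ).le)
      (by simpa [sq] using ivvp 0 0) (ivvp 0 1) (by simpa [sq] using ivvp 1 1)
    simpa [sq] using h
  have HHess : frobN (Ψ + (mixD F Ψ z)⁻¹ • (Ψ * mixHess F Ψ z * Ψ)) ≤ frobN Ψ * L := by
    have hginv : 0 ≤ g⁻¹ := inv_nonneg.2 hg_pos.le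
    set x := g⁻¹ * ∫ τ, (τ-z) 0 * (τ-z) 0 * p τ ∂F with hxdef
    set y := g⁻¹ * ∫ τ, (τ-z) 0 * (τ-z) 1 * p τ ∂F with hydef
    set w := g⁻¹ * ∫ τ, (τ-z) 1 * (τ-z) 1 * p τ ∂F with hwdef
    have hy10 : g⁻¹ * ∫ τ, (τ-z) 1 * (τ-z) 0 * p τ ∂F = y := by rw [hydef, hI10eq]
    have hxn : 0 ≤ x := mul_nonneg hginv hI00n
    have hwn : 0 ≤ w := mul_nonneg hginv hI11n
    have hyxw : y^2 ≤ x * w := by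
      rw [hxdef, hydef, hwdef]
      calc (g⁻¹ * ∫ τ, (τ-z) 0 * (τ-z) 1 * p τ ∂F)^2
          = g⁻¹^2 * (∫ τ, (τ-z) 0 * (τ-z) 1 * p τ ∂F)^2 := by ring
        _ ≤ g⁻¹^2 * ((∫ τ, (τ-z) 0 * (τ-z) 0 * p τ ∂F) * ∫ τ, (τ-z) 1 * (τ-z) 1 * p τ ∂F) :=
            mul_le_mul_of_nonneg_left hCSb (sq_nonneg _)
        _ = _ := by ring
    have htr : x + w ≤ frobN Ψ * L := by
      rw [hxdef, hwdef]
      calc g⁻¹ * (∫ τ, (τ-z) 0 * (τ-z) 0 * p τ ∂F)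
            + g⁻¹ * (∫ τ, (τ-z) 1 * (τ-z) 1 * p τ ∂F)
          = g⁻¹ * ((∫ τ, (τ-z) 0 * (τ-z) 0 * p τ ∂F)
            + ∫ τ, (τ-z) 1 * (τ-z) 1 * p τ ∂F) := by ring
        _ ≤ g⁻¹ * (frobN Ψ * (g * L)) := mul_le_mul_of_nonneg_left hsum2P hginv
        _ = frobN Ψ * L := by field_simp
    have hsum : x^2 + y^2 + (y^2 + w^2) ≤ (frobN Ψ * L)^2 := by
      have h1 : x^2 + y^2 + (y^2 + w^2) ≤ (x + w)^2 := by nlinarith [hyxw]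
      have h2 : (x + w)^2 ≤ (frobN Ψ * L)^2 :=
        pow_le_pow_left₀ (by linarith) htr 2
      linarith
    rw [frobN]
    simp only [Fin.sum_univ_two, hT 0 0, hT 0 1, hT 1 0, hT 1 1, hy10, ← hxdef, ← hydef, ← hwdef]
    calc Real.sqrt (x^2 + y^2 + (y^2 + w^2)) ≤ Real.sqrt ((frobN Ψ * L)^2) :=
          Real.sqrt_le_sqrt hsum
      _ = frobN Ψ * L := Real.sqrt_sq (mul_nonneg hfrP hL0)
  refine ⟨by rw [hlogeq]; exact parta, by rw [hlogeq]; exact HHess, ?_, ?_⟩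
  · -- part (c)
    intro ρ hρ0 hρu
    set r := 2*π*ρ with hrdef
    have hr0 : 0 < r := by rw [hrdef]; positivity
    have hrlt : r < Real.exp (-(1/2)) := by
      rw [hrdef]
      calc 2*π*ρ < 2*π*(1/(2*π*Real.sqrt (Real.exp 1))) :=
            mul_lt_mul_of_pos_left hρu (by positivity)
        _ = (Real.sqrt (Real.exp 1))⁻¹ := by
            have hsd : (0:ℝ) < Real.sqrt (Real.exp 1) := Real.sqrt_pos.2 (Real.exp_pos 1)
            field_simp
        _ = Real.exp (-(1/2)) := by
            rw [Real.exp_neg, Real.exp_half]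
    have hrlt1 : r < 1 := by
      refine lt_trans hrlt ?_
      calc Real.exp (-(1/2)) < Real.exp 0 := Real.exp_lt_exp.2 (by norm_num)
        _ = 1 := Real.exp_zero
    have hlr2 : 0 < Real.log (1/r^2) := by
      apply Real.log_pos
      rw [lt_div_iff₀ (by positivity), one_mul]
      nlinarith [hrlt1, hr0]
    have hphi : phiPlus ρ = Real.sqrt (Real.log (1/r^2)) := rfl
    have hM_pos : 0 < max (mixD F Ψ z) (ρ / Real.sqrt Ψ.det) :=
      lt_of_lt_of_le hf_pos (le_max_left _ _)
    have hsd : (0:ℝ) < Real.sqrt Ψ.det := Real.sqrt_pos.2 hdet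
    have hρd : ρ / Real.sqrt Ψ.det = c * r := by
      rw [hrdef, hcdef, gconst, Real.sqrt_mul (by positivity : (0:ℝ) ≤ (2*π)^2),
        Real.sqrt_sq (by positivity : (0:ℝ) ≤ 2*π)]
      field_simp
    have hM : max (mixD F Ψ z) (ρ / Real.sqrt Ψ.det) = c * max g r := by
      rw [hfD, hρd]
      rcases le_total g r with h | h
      · rw [max_eq_right h, max_eq_right (mul_le_mul_of_nonneg_left h hc.le)]
      · rw [max_eq_left h, max_eq_left (mul_le_mul_of_nonneg_left h hc.le)]
    have hlog2 : Real.log (1/r^2) = 2 * Real.log (1/r) := by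
      rw [one_div, one_div, Real.log_inv, Real.log_inv, Real.log_pow]; push_cast; ring
    have hLg : L = 2 * Real.log (1/g) := by rw [hL, one_div, Real.log_inv]; ring
    have hcore : g^2 * L ≤ (max g r)^2 * Real.log (1/r^2) := by
      rcases le_total g r with h | h
      · rw [max_eq_right h, hLg, hlog2]
        linarith [aux_mono1 g r hg_pos h hrlt.le]
      · rw [max_eq_left h, hLg, hlog2]
        have hlle : Real.log (1/g) ≤ Real.log (1/r) :=
          Real.log_le_log (by positivity) (one_div_le_one_div_of_le hr0 h)
        linarith [mul_le_mul_of_nonneg_left hlle (sq_nonneg g)]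
    have hKey : (mixD F Ψ z)^2 * L
        ≤ (max (mixD F Ψ z) (ρ / Real.sqrt Ψ.det))^2 * Real.log (1/r^2) := by
      rw [hM, hfD]
      calc (c*g)^2 * L = c^2 * (g^2*L) := by ring
        _ ≤ c^2 * ((max g r)^2 * Real.log (1/r^2)) :=
            mul_le_mul_of_nonneg_left hcore (sq_nonneg c)
        _ = (c * max g r)^2 * Real.log (1/r^2) := by ring
    have h1 : (n2 (mixGrad F Ψ z))^2 ≤ frobN A * Real.log (1/r^2)
        * (max (mixD F Ψ z) (ρ / Real.sqrt Ψ.det))^2 := by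
      calc (n2 (mixGrad F Ψ z))^2 ≤ frobN A * L * (mixD F Ψ z)^2 := HGradSq
        _ = frobN A * ((mixD F Ψ z)^2 * L) := by ring
        _ ≤ frobN A * ((max (mixD F Ψ z) (ρ / Real.sqrt Ψ.det))^2
            * Real.log (1/r^2)) := mul_le_mul_of_nonneg_left hKey hfrA
        _ = _ := by ring
    rw [div_le_iff₀ hM_pos, hphi]
    have h2 := Real.sqrt_le_sqrt h1
    rw [Real.sqrt_sq hn2nonneg] at h2
    calc n2 (mixGrad F Ψ z)
        ≤ Real.sqrt (frobN A * Real.log (1/r^2)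
            * (max (mixD F Ψ z) (ρ / Real.sqrt Ψ.det))^2) := h2
      _ = Real.sqrt (frobN A) * Real.sqrt (Real.log (1/r^2))
            * max (mixD F Ψ z) (ρ / Real.sqrt Ψ.det) := by
          rw [Real.sqrt_mul (mul_nonneg hfrA hlr2.le), Real.sqrt_mul hfrA,
            Real.sqrt_sq hM_pos.le]
  · -- part (d)
    intro ρ hρ0 hρu
    set r := 2*π*ρ with hrdef
    have hr0 : 0 < r := by rw [hrdef]; positivity
    have hrle : r ≤ Real.exp (-1) := by
      rw [hrdef]
      refine le_of_lt ?_
      calc 2*π*ρ < 2*π*(1/(2*π*Real.exp 1)) :=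
            mul_lt_mul_of_pos_left hρu (by positivity)
        _ = (Real.exp 1)⁻¹ := by
            have he : (0:ℝ) < Real.exp 1 := Real.exp_pos 1
            field_simp
        _ = Real.exp (-1) := (Real.exp_neg 1).symm
    have hrlt1 : r < 1 := by
      refine lt_of_le_of_lt hrle ?_
      calc Real.exp (-1) < Real.exp 0 := Real.exp_lt_exp.2 (by norm_num)
        _ = 1 := Real.exp_zero
    have hlr2 : 0 < Real.log (1/r^2) := by
      apply Real.log_pos
      rw [lt_div_iff₀ (by positivity), one_mul]
      nlinarith [hrlt1, hr0]
    have hphisq : phiPlus ρ ^ 2 = Real.log (1/r^2) := Real.sq_sqrt hlr2.le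
    have hM_pos : 0 < max (mixD F Ψ z) (ρ / Real.sqrt Ψ.det) :=
      lt_of_lt_of_le hf_pos (le_max_left _ _)
    have hsd : (0:ℝ) < Real.sqrt Ψ.det := Real.sqrt_pos.2 hdet
    have hρd : ρ / Real.sqrt Ψ.det = c * r := by
      rw [hrdef, hcdef, gconst, Real.sqrt_mul (by positivity : (0:ℝ) ≤ (2*π)^2),
        Real.sqrt_sq (by positivity : (0:ℝ) ≤ 2*π)]
      field_simp
    have hM : max (mixD F Ψ z) (ρ / Real.sqrt Ψ.det) = c * max g r := by
      rw [hfD, hρd]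
      rcases le_total g r with h | h
      · rw [max_eq_right h, max_eq_right (mul_le_mul_of_nonneg_left h hc.le)]
      · rw [max_eq_left h, max_eq_left (mul_le_mul_of_nonneg_left h hc.le)]
    have hm_pos : 0 < max g r := lt_of_lt_of_le hg_pos (le_max_left _ _)
    have hlog2 : Real.log (1/r^2) = 2 * Real.log (1/r) := by
      rw [one_div, one_div, Real.log_inv, Real.log_inv, Real.log_pow]; push_cast; ring
    have hLg : L = 2 * Real.log (1/g) := by rw [hL, one_div, Real.log_inv]; ring
    have hcore2 : L * g ≤ Real.log (1/r^2) * max g r := by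
      rcases le_total g r with h | h
      · rw [max_eq_right h, hLg, hlog2]
        linarith [aux_mono2 g r hg_pos h hrle]
      · rw [max_eq_left h, hLg, hlog2]
        have hlle : Real.log (1/g) ≤ Real.log (1/r) :=
          Real.log_le_log (by positivity) (one_div_le_one_div_of_le hr0 h)
        linarith [mul_le_mul_of_nonneg_right hlle hg_pos.le]
    have hKey2 : L * (mixD F Ψ z / max (mixD F Ψ z) (ρ / Real.sqrt Ψ.det))
        ≤ Real.log (1/r^2) := by
      rw [hM, hfD, mul_div_mul_left _ _ hc.ne', ← mul_div_assoc, div_le_iff₀ hm_pos]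
      exact hcore2
    have hfM0 : 0 ≤ mixD F Ψ z / max (mixD F Ψ z) (ρ / Real.sqrt Ψ.det) :=
      div_nonneg hf_pos.le hM_pos.le
    constructor
    · calc (n2 (mixGrad F Ψ z) / mixD F Ψ z) ^ 2
          * (mixD F Ψ z / max (mixD F Ψ z) (ρ / Real.sqrt Ψ.det))
          ≤ (frobN A * L) * (mixD F Ψ z / max (mixD F Ψ z) (ρ / Real.sqrt Ψ.det)) :=
            mul_le_mul_of_nonneg_right parta hfM0
        _ = frobN A * (L * (mixD F Ψ z / max (mixD F Ψ z) (ρ / Real.sqrt Ψ.det))) := by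
            ring
        _ ≤ frobN A * Real.log (1/r^2) := mul_le_mul_of_nonneg_left hKey2 hfrA
        _ = frobN A * phiPlus ρ ^ 2 := by rw [hphisq]
    · calc frobN (Ψ + (mixD F Ψ z)⁻¹ • (Ψ * mixHess F Ψ z * Ψ))
          * (mixD F Ψ z / max (mixD F Ψ z) (ρ / Real.sqrt Ψ.det))
          ≤ (frobN Ψ * L) * (mixD F Ψ z / max (mixD F Ψ z) (ρ / Real.sqrt Ψ.det)) :=
            mul_le_mul_of_nonneg_right HHess hfM0
        _ = frobN Ψ * (L * (mixD F Ψ z / max (mixD F Ψ z) (ρ / Real.sqrt Ψ.det))) := by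
            ring
        _ ≤ frobN Ψ * Real.log (1/r^2) := mul_le_mul_of_nonneg_left hKey2 hfrP
        _ = frobN Ψ * phiPlus ρ ^ 2 := by rw [hphisq]



end PolicyEB
end
end

section
/- (Anti-concentration of a density at its small values.) Let f be a probability density on Rⁿ of a random vector Z = (Z_1,…,Z_n) with finite second moments. Then for any M > 0 and t > 0: ∫_{Rⁿ} 1{f(z) ≤ t}·f(z) dz ≤ (2M)ⁿ·t + ( Σ_{i=1}^n Var(Z_i) ) / M². In particular, for n = 2, choosing M = t^{−1/4}·(Var(Z_1) + Var(Z_2))^{1/4} yields ∫_{R²} 1{f(z) ≤ t}·f(z) dz ≤ 5·t^{1/2}·(Var(Z_1) + Var(Z_2))^{1/2}. -/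
open MeasureTheory ProbabilityTheory Matrix Real Filter Set
open scoped ENNReal NNReal Classical

noncomputable section

namespace PolicyEB

attribute [local instance] Matrix.normedAddCommGroup Matrix.normedSpace

variable {J T : ℕ} {Ωs : Type}

/-- Lebesgue measure on `ℝⁿ`. -/
def voln (n : ℕ) : Measure (Fin n → ℝ) := Measure.pi fun _ => volume

/-- Mean of the `i`-th coordinate under the density `f`. -/
def densMean (n : ℕ) (f : (Fin n → ℝ) → ℝ) (i : Fin n) : ℝ := ∫ y, y i * f y ∂voln n

/-- Variance of the `i`-th coordinate under the density `f`. -/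
def densVar (n : ℕ) (f : (Fin n → ℝ) → ℝ) (i : Fin n) : ℝ :=
  ∫ z, (z i - densMean n f i) ^ 2 * f z ∂voln n

/-- Lemma SM6.9: anti-concentration of a density at its small values. -/
theorem lem_anticoncentration (n : ℕ) (f : (Fin n → ℝ) → ℝ)
    (hmeas : Measurable f) (hnn : ∀ z, 0 ≤ f z)
    (hint : ∫ z, f z ∂voln n = 1)
    (hmom : ∀ i, Integrable (fun z => z i ^ 2 * f z) (voln n)) :
    (∀ M : ℝ, 0 < M → ∀ tv : ℝ, 0 < tv →
      ∫ z, Set.indicator {z | f z ≤ tv} f z ∂voln n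
        ≤ (2 * M) ^ n * tv + (∑ i, densVar n f i) / M ^ 2) ∧
    (n = 2 → ∀ tv : ℝ, 0 < tv →
      ∫ z, Set.indicator {z | f z ≤ tv} f z ∂voln n
        ≤ 5 * tv ^ ((1 : ℝ) / 2) * (∑ i, densVar n f i) ^ ((1 : ℝ) / 2)) := by
  classical
  have hf_int : Integrable f (voln n) := by
    by_contra h
    rw [integral_undef h] at hint
    exact zero_ne_one hint
  have hzf : ∀ i, Integrable (fun z => z i * f z) (voln n) := by
    intro i
    refine ((hmom i).add hf_int).mono
      (((measurable_pi_apply i).mul hmeas).aestronglyMeasurable) ?_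
    filter_upwards with z
    have h0 := hnn z
    rw [Real.norm_eq_abs, Real.norm_eq_abs, abs_mul, abs_of_nonneg h0]
    have h1 : |z i| ≤ z i ^ 2 + 1 := by
      nlinarith [abs_nonneg (z i), sq_abs (z i)]
    calc |z i| * f z ≤ (z i ^ 2 + 1) * f z := by nlinarith
      _ = z i ^ 2 * f z + f z := by ring
      _ ≤ |z i ^ 2 * f z + f z| := le_abs_self _
  set μm : Fin n → ℝ := densMean n f with hμm
  have hsq : ∀ i, Integrable (fun z => (z i - μm i) ^ 2 * f z) (voln n) := by
    intro i
    have he : (fun z : Fin n → ℝ => (z i - μm i) ^ 2 * f z)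
        = fun z => z i ^ 2 * f z - (2 * μm i) * (z i * f z) + (μm i) ^ 2 * f z := by
      funext z; ring
    rw [he]
    exact ((hmom i).sub ((hzf i).const_mul _)).add (hf_int.const_mul _)
  have hVar : ∀ i, densVar n f i = ∫ z, (z i - μm i) ^ 2 * f z ∂voln n := fun i => rfl
  have hVar_nonneg : ∀ i, 0 ≤ densVar n f i := by
    intro i
    rw [hVar]
    exact integral_nonneg fun z => mul_nonneg (sq_nonneg _) (hnn z)
  have hg_int : Integrable (fun z => (∑ i, (z i - μm i) ^ 2) * f z) (voln n) := by
    have he : (fun z : Fin n → ℝ => (∑ i, (z i - μm i) ^ 2) * f z)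
        = fun z => ∑ i, (z i - μm i) ^ 2 * f z := by
      funext z; rw [Finset.sum_mul]
    rw [he]
    exact integrable_finset_sum _ fun i _ => hsq i
  have part1 : ∀ M : ℝ, 0 < M → ∀ tv : ℝ, 0 < tv →
      ∫ z, Set.indicator {z | f z ≤ tv} f z ∂voln n
        ≤ (2 * M) ^ n * tv + (∑ i, densVar n f i) / M ^ 2 := by
    intro M hM tv htv
    set B : Set (Fin n → ℝ) := Set.pi Set.univ (fun i => Icc (μm i - M) (μm i + M)) with hB
    have hBmeas : MeasurableSet B :=
      MeasurableSet.univ_pi fun i => measurableSet_Icc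
    have hBvol : voln n B = (ENNReal.ofReal (2 * M)) ^ n := by
      have hv : ∀ i : Fin n, volume (Icc (μm i - M) (μm i + M)) = ENNReal.ofReal (2 * M) := by
        intro i
        rw [Real.volume_Icc]
        ring_nf
      rw [hB, voln, Measure.pi_pi, Finset.prod_congr rfl fun i _ => hv i,
        Finset.prod_const, Finset.card_univ, Fintype.card_fin]
    have hBfin : voln n B < ⊤ := by
      rw [hBvol]
      exact ENNReal.pow_lt_top ENNReal.ofReal_lt_top
    set S : Set (Fin n → ℝ) := {z | f z ≤ tv} with hSdef
    have hSmeas : MeasurableSet S := measurableSet_le hmeas measurable_const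
    rw [integral_indicator hSmeas]
    have hsplit : ∫ z in S, f z ∂voln n
        = ∫ z in S ∩ B, f z ∂voln n + ∫ z in S \ B, f z ∂voln n :=
      (integral_inter_add_diff hBmeas hf_int.integrableOn).symm
    have bound1 : ∫ z in S ∩ B, f z ∂voln n ≤ (2 * M) ^ n * tv := by
      have hfin : voln n (S ∩ B) < ⊤ :=
        lt_of_le_of_lt (measure_mono Set.inter_subset_right) hBfin
      calc ∫ z in S ∩ B, f z ∂voln n
          ≤ ∫ _z in S ∩ B, tv ∂voln n := by
            refine setIntegral_mono_on hf_int.integrableOn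
              (integrableOn_const hfin.ne) (hSmeas.inter hBmeas) ?_
            intro z hz
            exact hz.1
        _ = (voln n (S ∩ B)).toReal * tv := by
            rw [setIntegral_const, smul_eq_mul]; rfl
        _ ≤ (2 * M) ^ n * tv := by
            refine mul_le_mul_of_nonneg_right ?_ htv.le
            have h1 : voln n (S ∩ B) ≤ (ENNReal.ofReal (2 * M)) ^ n := by
              rw [← hBvol]; exact measure_mono Set.inter_subset_right
            calc (voln n (S ∩ B)).toReal
                ≤ ((ENNReal.ofReal (2 * M)) ^ n).toReal :=
                  ENNReal.toReal_mono (ENNReal.pow_ne_top ENNReal.ofReal_ne_top) h1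
              _ = (2 * M) ^ n := by
                  rw [ENNReal.toReal_pow, ENNReal.toReal_ofReal (by positivity)]
    have bound2 : ∫ z in S \ B, f z ∂voln n ≤ (∑ i, densVar n f i) / M ^ 2 := by
      have hMi : (0:ℝ) < M⁻¹ ^ 2 := by positivity
      calc ∫ z in S \ B, f z ∂voln n
          ≤ ∫ z in S \ B, M⁻¹ ^ 2 * ((∑ i, (z i - μm i) ^ 2) * f z) ∂voln n := by
            refine setIntegral_mono_on hf_int.integrableOn
              ((hg_int.const_mul _).integrableOn) (hSmeas.diff hBmeas) ?_
            intro z hz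
            have hzB : z ∉ B := hz.2
            rw [hB, Set.mem_univ_pi] at hzB
            push_neg at hzB
            obtain ⟨i, hi⟩ := hzB
            rw [Set.mem_Icc] at hi
            have hd : M ^ 2 ≤ (z i - μm i) ^ 2 := by
              rcases not_and_or.mp hi with h | h <;> push_neg at h <;> nlinarith
            have hds : M ^ 2 ≤ ∑ j, (z j - μm j) ^ 2 :=
              le_trans hd (Finset.single_le_sum
                (f := fun j => (z j - μm j) ^ 2) (fun j _ => sq_nonneg _)
                (Finset.mem_univ i))
            have h1 : (1:ℝ) ≤ M⁻¹ ^ 2 * ∑ j, (z j - μm j) ^ 2 := by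
              rw [inv_pow, ← inv_mul_cancel₀ (ne_of_gt (pow_pos hM 2))]
              exact mul_le_mul_of_nonneg_left hds (by positivity)
            calc f z = 1 * f z := (one_mul _).symm
              _ ≤ (M⁻¹ ^ 2 * ∑ j, (z j - μm j) ^ 2) * f z :=
                  mul_le_mul_of_nonneg_right h1 (hnn z)
              _ = M⁻¹ ^ 2 * ((∑ j, (z j - μm j) ^ 2) * f z) := by ring
        _ ≤ ∫ z, M⁻¹ ^ 2 * ((∑ i, (z i - μm i) ^ 2) * f z) ∂voln n := by
            refine setIntegral_le_integral (hg_int.const_mul _) ?_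
            filter_upwards with z
            exact mul_nonneg (by positivity) (mul_nonneg
              (Finset.sum_nonneg fun i _ => sq_nonneg _) (hnn z))
        _ = (∑ i, densVar n f i) / M ^ 2 := by
            rw [integral_const_mul]
            have he : ∫ z, (∑ i, (z i - μm i) ^ 2) * f z ∂voln n
                = ∑ i, densVar n f i := by
              have he2 : (fun z : Fin n → ℝ => (∑ i, (z i - μm i) ^ 2) * f z)
                  = fun z => ∑ i, (z i - μm i) ^ 2 * f z := by
                funext z; rw [Finset.sum_mul]
              rw [he2, integral_finset_sum _ fun i _ => hsq i]
              exact Finset.sum_congr rfl fun i _ => (hVar i).symm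
            rw [he, inv_pow, inv_mul_eq_div]
    rw [hsplit]
    linarith
  refine ⟨part1, ?_⟩
  intro hn2 tv htv
  subst hn2
  set Sv : ℝ := ∑ i, densVar 2 f i with hSv
  have hSv0 : 0 ≤ Sv := Finset.sum_nonneg fun i _ => hVar_nonneg i
  have hSvpos : 0 < Sv := by
    rcases hSv0.lt_or_eq with h | h
    · exact h
    exfalso
    have hVz : ∀ i : Fin 2, densVar 2 f i = 0 := by
      intro i
      have := (Finset.sum_eq_zero_iff_of_nonneg fun j _ => hVar_nonneg j).mp h.symm
      exact this i (Finset.mem_univ i)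
    have hae : ∀ i : Fin 2, (fun z => (z i - μm i) ^ 2 * f z) =ᵐ[voln 2] 0 := by
      intro i
      refine (integral_eq_zero_iff_of_nonneg
        (fun z => mul_nonneg (sq_nonneg _) (hnn z)) (hsq i)).mp ?_
      rw [← hVar i]
      exact hVz i
    have hsing : voln 2 ({μm} : Set (Fin 2 → ℝ)) = 0 := by
      rw [← Set.univ_pi_singleton μm, voln, Measure.pi_pi]
      simp
    have hnotmem : ∀ᵐ z ∂voln 2, z ∉ ({μm} : Set (Fin 2 → ℝ)) := by
      rw [ae_iff]
      simpa using hsing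
    have hfz : ∀ᵐ z ∂voln 2, f z = 0 := by
      filter_upwards [hae 0, hae 1, hnotmem] with z h0 h1 hz
      have hne : z ≠ μm := by simpa using hz
      obtain ⟨i, hi⟩ := Function.ne_iff.mp hne
      fin_cases i
      · exact ((by simpa using h0 : z 0 - μm 0 = 0 ∨ f z = 0)).resolve_left
          (sub_ne_zero.mpr hi)
      · exact ((by simpa using h1 : z 1 - μm 1 = 0 ∨ f z = 0)).resolve_left
          (sub_ne_zero.mpr hi)
    have : ∫ z, f z ∂voln 2 = 0 := by
      rw [integral_congr_ae hfz]
      simp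
    rw [hint] at this
    exact one_ne_zero this
  set M : ℝ := Real.sqrt (Real.sqrt (Sv / tv)) with hMdef
  have hQpos : 0 < Sv / tv := div_pos hSvpos htv
  have hM : 0 < M := Real.sqrt_pos.2 (Real.sqrt_pos.2 hQpos)
  have hkey := part1 M hM tv htv
  have hM2 : M ^ 2 = Real.sqrt (Sv / tv) := Real.sq_sqrt (Real.sqrt_nonneg _)
  set a : ℝ := Real.sqrt tv with ha
  set b : ℝ := Real.sqrt Sv with hb
  have hapos : 0 < a := Real.sqrt_pos.2 htv
  have hbpos : 0 < b := Real.sqrt_pos.2 hSvpos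
  have ha2 : a ^ 2 = tv := Real.sq_sqrt htv.le
  have hb2 : b ^ 2 = Sv := Real.sq_sqrt hSvpos.le
  have hdiv : Real.sqrt (Sv / tv) = b / a := Real.sqrt_div hSvpos.le tv
  have hM2' : M ^ 2 = b / a := hM2.trans hdiv
  have halg : (2 * M) ^ 2 * tv + Sv / M ^ 2 = 5 * a * b := by
    have h4 : (2 * M) ^ 2 = 4 * (b / a) := by rw [mul_pow, hM2']; norm_num
    rw [h4, hM2', ← ha2, ← hb2]
    field_simp
    ring
  have hrw : tv ^ ((1:ℝ)/2) = a := (Real.sqrt_eq_rpow tv).symm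
  have hrw2 : Sv ^ ((1:ℝ)/2) = b := (Real.sqrt_eq_rpow Sv).symm
  rw [hrw, hrw2]
  calc ∫ z, Set.indicator {z | f z ≤ tv} f z ∂voln 2 ≤ (2 * M) ^ 2 * tv + Sv / M ^ 2 := hkey
    _ = 5 * a * b := halg


end PolicyEB
end
end
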